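/- In the DFS notification analysis: let P(v,r) denote a shortest directed path from v to r in the strongly-connected orientation of a 2-edge-connected n-node graph with DFS tree rooted at r. If every already-visited node w satisfies Count(w) ≤ ID(r) + length(P(w,r)), and v is an unvisited node whose counter is constrained by |Count(x) − Count(y)| ≤ 1 along every edge not equal to the currently explored edge, then choosing w as the first visited node on P(v,r) gives Count(v) ≤ ID(r) + length(P(v,r)) ≤ ID(r) + n − 1. -/

import Mathlib

/-- Chain-and-anchor bound for the DFS notification analysis. `D` is the
strongly connected orientation, `dist w` is the directed distance from `w` to
the root `r`, `R` is the set of already-visited nodes (containing `r`), and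
`ex` is the currently explored directed edge, whose tail lies in `R`. If
every visited node `w` satisfies `cnt w ≤ IDr + dist w`, counters change by
at most 1 along every directed edge other than `ex`, and `p` is a shortest
directed path from the unvisited node `v` to `r` (distances decreasing by one
along it), then `cnt v ≤ IDr + dist v ≤ IDr + (n - 1)`. -/
theorem stmt9 {V : Type*} [Fintype V] (D : V → V → Prop)
    (R : Set V) (r : V) (hr : r ∈ R)
    (dist : V → ℕ) (IDr : ℕ) (cnt : V → ℕ)
    (hvisited : ∀ w ∈ R, cnt w ≤ IDr + dist w)
    (hdistle : ∀ x : V, dist x ≤ Fintype.card V - 1)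
    (hdistr : dist r = 0)
    (ex : V × V) (hex : ex.1 ∈ R)
    (hstep : ∀ a b : V, D a b → (a, b) ≠ ex → cnt a ≤ cnt b + 1)
    (v : V) (hv : v ∉ R)
    (p : List V) (hphead : p.head? = some v) (hplast : p.getLast? = some r)
    (hchain : p.Chain' D)
    (hlen : p.length = dist v + 1)
    (hshort : ∀ i : Fin p.length, dist (p.get i) = dist v - (i : ℕ)) :
    cnt v ≤ IDr + dist v ∧ cnt v ≤ IDr + (Fintype.card V - 1) := by
  have aux : ∀ q : List V, ∀ u : V, q.head? = some u → q.getLast? = some r →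
      q.Chain' D → q.length = dist u + 1 →
      (∀ i : Fin q.length, dist (q.get i) = dist u - (i : ℕ)) →
      cnt u ≤ IDr + dist u := by
    intro q
    induction q with
    | nil => intro u h; simp at h
    | cons a t ih =>
      intro u hhead hlast hch hlenq hsh
      have hau : a = u := by simpa using hhead
      subst hau
      by_cases haR : a ∈ R
      · exact hvisited a haR
      · cases t with
        | nil =>
          have : a = r := by simpa using hlast
          exact absurd (this ▸ hr) haR
        | cons b t' =>
          simp only [List.Chain', List.isChain_cons_cons] at hch
          have hne : (a, b) ≠ ex := by
            intro h
            exact haR (by rw [← h] at hex; exact hex)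
          have h1 : cnt a ≤ cnt b + 1 := hstep a b hch.1 hne
          have hdv : dist a = t'.length + 1 := by
            simp [List.length] at hlenq; omega
          have hdb : dist b = dist a - 1 := by
            have := hsh ⟨1, by simp⟩
            simpa using this
          have hb : cnt b ≤ IDr + dist b := by
            apply ih b rfl
            · simpa [List.getLast?_cons_cons] using hlast
            · exact hch.2
            · simp only [List.length_cons]; omega
            · intro i
              have hi : (i : ℕ) + 1 < (a :: b :: t').length := by
                have := i.isLt; simp only [List.length_cons] at this ⊢; omega
              have h2 := hsh ⟨(i : ℕ) + 1, hi⟩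
              simp only [List.get_eq_getElem, List.getElem_cons_succ] at h2 ⊢
              rw [h2]
              omega
          omega
  have h := aux p v hphead hplast hchain hlen hshort
  have := hdistle v
  exact ⟨h, by omega⟩
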